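/- Let X be a real normed vector space, θ = (k_r) a lacunary sequence, and p ≥ 1. The following are equivalent: (1) X is complete; (2) S_{N_θ}(∑ x_i) is a complete space for every weakly unconditionally Cauchy series ∑ x_i in X; (3) S_{S_θ}(∑ x_i) is a complete space for every weakly unconditionally Cauchy series ∑ x_i in X; (4) S_{w_p}(∑ x_i) is a complete space for every weakly unconditionally Cauchy series ∑ x_i in X. -/

import Mathlib

open Filter Finset
open scoped Classical

set_option maxHeartbeats 1000000
set_option synthInstance.maxHeartbeats 400000

/-- `θ` is a lacunary sequence: `θ 0 = 0`, `θ` is strictly increasing and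
`h_r = θ (r+1) - θ r → ∞`.  (Intervals `I_r = (θ r, θ (r+1)]`.) -/
def IsLacunary (θ : ℕ → ℕ) : Prop :=
  θ 0 = 0 ∧ StrictMono θ ∧ Tendsto (fun r => θ (r + 1) - θ r) atTop atTop

/-- `x` is strongly lacunary (`N_θ`) summable to `L`. -/
def NthetaSummable {X : Type*} [NormedAddCommGroup X] (θ : ℕ → ℕ) (x : ℕ → X) (L : X) : Prop :=
  Tendsto (fun r => (1 / (θ (r + 1) - θ r : ℝ)) * ∑ k ∈ Finset.Ioc (θ r) (θ (r + 1)), ‖x k - L‖)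
    atTop (nhds 0)

/-- `x` is lacunary statistically (`S_θ`) convergent to `L`. -/
def SthetaConvergent {X : Type*} [NormedAddCommGroup X] (θ : ℕ → ℕ) (x : ℕ → X) (L : X) : Prop :=
  ∀ ε > (0 : ℝ),
    Tendsto (fun r => (1 / (θ (r + 1) - θ r : ℝ)) *
      (((Finset.Ioc (θ r) (θ (r + 1))).filter (fun k => ε ≤ ‖x k - L‖)).card : ℝ))
      atTop (nhds 0)

/-- The series `∑ x i` is weakly unconditionally Cauchy: `∑ |f (x i)| < ∞`
for every continuous linear functional `f`. -/
def WUCSeries {X : Type*} [NormedAddCommGroup X] [NormedSpace ℝ X] (x : ℕ → X) : Prop :=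
  ∀ f : X →L[ℝ] ℝ, Summable fun i => |f (x i)|

/-- The `S_θ`-summability space of the series `∑ x i` inside `ℓ∞`. -/
def SthetaSummabilitySpace {X : Type*} [NormedAddCommGroup X] [NormedSpace ℝ X]
    (θ : ℕ → ℕ) (x : ℕ → X) : Set (lp (fun _ : ℕ => ℝ) ⊤) :=
  {a | ∃ L : X, SthetaConvergent θ (fun n => ∑ i ∈ Finset.range n, a i • x i) L}

/-- The `N_θ`-summability space of the series `∑ x i` inside `ℓ∞`. -/
def NthetaSummabilitySpace {X : Type*} [NormedAddCommGroup X] [NormedSpace ℝ X]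
    (θ : ℕ → ℕ) (x : ℕ → X) : Set (lp (fun _ : ℕ => ℝ) ⊤) :=
  {a | ∃ L : X, NthetaSummable θ (fun n => ∑ i ∈ Finset.range n, a i • x i) L}

/-- `x` is strongly `p`-Cesàro (`w_p`) summable to `L`. -/
def WpSummable {X : Type*} [NormedAddCommGroup X] (p : ℝ) (x : ℕ → X) (L : X) : Prop :=
  Tendsto (fun n : ℕ => (1 / (n : ℝ)) * ∑ i ∈ Finset.range n, ‖x i - L‖ ^ p) atTop (nhds 0)

/-- The `w_p`-summability space of the series `∑ x i` inside `ℓ∞`. -/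
def WpSummabilitySpace {X : Type*} [NormedAddCommGroup X] [NormedSpace ℝ X]
    (p : ℝ) (x : ℕ → X) : Set (lp (fun _ : ℕ => ℝ) ⊤) :=
  {a | ∃ L : X, WpSummable p (fun n => ∑ i ∈ Finset.range n, a i • x i) L}


section Aux

variable {X : Type*} [NormedAddCommGroup X] [NormedSpace ℝ X]

/-- A nonneg sequence that's eventually below every positive number tends to 0. -/
theorem tendsto_zero_of_forall_eventually_lt {F : ℕ → ℝ} (h0 : ∀ r, 0 ≤ F r)
    (h : ∀ ε > (0 : ℝ), ∀ᶠ r in atTop, F r < ε) : Tendsto F atTop (nhds 0) := by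
  rw [Metric.tendsto_atTop]
  intro ε hε
  obtain ⟨N, hN⟩ := (h ε hε).exists_forall_of_atTop
  exact ⟨N, fun n hn => by
    rw [Real.dist_eq, sub_zero, abs_of_nonneg (h0 n)]; exact hN n hn⟩

/-- A Cauchy sequence not converging to `L` is eventually bounded away from `L`. -/
theorem exists_lower_of_cauchy_not_tendsto {S : ℕ → X} {L : X} (hS : CauchySeq S)
    (hnot : ¬ Tendsto S atTop (nhds L)) :
    ∃ c > (0 : ℝ), ∀ᶠ k in atTop, c ≤ ‖S k - L‖ := by
  rw [Metric.tendsto_atTop] at hnot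
  push_neg at hnot
  obtain ⟨ε, hε, hfar⟩ := hnot
  obtain ⟨N, hN⟩ := (Metric.cauchySeq_iff.1 hS) (ε / 2) (by linarith)
  obtain ⟨n0, hn0, hn0far⟩ := hfar N
  refine ⟨ε / 2, by linarith, eventually_atTop.2 ⟨N, fun k hk => ?_⟩⟩
  have h1 : dist (S n0) L ≤ dist (S n0) (S k) + dist (S k) L := dist_triangle _ _ _
  have h2 : dist (S n0) (S k) < ε / 2 := hN n0 hn0 k hk
  rw [← dist_eq_norm]
  linarith

/-- Uniform bound for partial sums of a wuC series against coefficients in `[-1,1]`. -/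
theorem wuc_bound {x : ℕ → X} (hx : WUCSeries x) :
    ∃ C : ℝ, 0 ≤ C ∧ ∀ (b : ℕ → ℝ) (k : ℕ), (∀ i, |b i| ≤ 1) →
      ‖∑ i ∈ Finset.range k, b i • x i‖ ≤ C := by
  set g : {v : (ℕ → ℝ) × ℕ // ∀ i, |v.1 i| ≤ 1} →
      StrongDual ℝ X →L[ℝ] ℝ :=
    fun v => NormedSpace.inclusionInDoubleDualLi ℝ
      (∑ i ∈ Finset.range v.1.2, v.1.1 i • x i) with hg
  have hbdd : ∀ f, ∃ C, ∀ v, ‖g v f‖ ≤ C := by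
    intro f
    refine ⟨∑' i, |f (x i)|, fun v => ?_⟩
    have hgv : g v f = f (∑ i ∈ Finset.range v.1.2, v.1.1 i • x i) := rfl
    rw [hgv, map_sum]
    calc ‖∑ i ∈ Finset.range v.1.2, f (v.1.1 i • x i)‖
        ≤ ∑ i ∈ Finset.range v.1.2, ‖f (v.1.1 i • x i)‖ := norm_sum_le _ _
      _ ≤ ∑ i ∈ Finset.range v.1.2, |f (x i)| := by
          refine Finset.sum_le_sum fun i _ => ?_
          rw [map_smul, smul_eq_mul, Real.norm_eq_abs, abs_mul]
          exact mul_le_of_le_one_left (abs_nonneg _) (v.2 i)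
      _ ≤ ∑' i, |f (x i)| := Summable.sum_le_tsum _ (fun i _ => abs_nonneg _) (hx f)
  obtain ⟨C', hC'⟩ := banach_steinhaus hbdd
  refine ⟨max C' 0, le_max_right _ _, fun b k hb => ?_⟩
  have h1 := hC' ⟨(b, k), hb⟩
  have h2 : ‖g ⟨(b, k), hb⟩‖ = ‖∑ i ∈ Finset.range k, b i • x i‖ :=
    (NormedSpace.inclusionInDoubleDualLi ℝ).norm_map _
  rw [h2] at h1
  exact h1.trans (le_max_left _ _)

/-- Scaled version of `wuc_bound`. -/
theorem wuc_bound' {x : ℕ → X} (hx : WUCSeries x) :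
    ∃ C : ℝ, 0 ≤ C ∧ ∀ (b : ℕ → ℝ) (B : ℝ) (k : ℕ), (∀ i, |b i| ≤ B) →
      ‖∑ i ∈ Finset.range k, b i • x i‖ ≤ C * B := by
  obtain ⟨C, hC0, hC⟩ := wuc_bound hx
  refine ⟨C, hC0, fun b B k hb => ?_⟩
  have hB0 : 0 ≤ B := (abs_nonneg (b 0)).trans (hb 0)
  rcases eq_or_lt_of_le hB0 with hB | hB
  · have hbz : ∀ i, b i = 0 := fun i =>
      abs_eq_zero.1 (le_antisymm ((hb i).trans hB.symm.le) (abs_nonneg _))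
    simp [hbz, ← hB]
  · have key : ‖∑ i ∈ Finset.range k, (b i / B) • x i‖ ≤ C :=
      hC _ k fun i => by
        rw [abs_div, abs_of_pos hB, div_le_one hB]; exact hb i
    have : ∑ i ∈ Finset.range k, b i • x i
        = B • ∑ i ∈ Finset.range k, (b i / B) • x i := by
      rw [Finset.smul_sum]
      refine Finset.sum_congr rfl fun i _ => ?_
      rw [smul_smul, mul_div_cancel₀ _ hB.ne']
    rw [this, norm_smul, Real.norm_eq_abs, abs_of_pos hB, mul_comm]
    exact mul_le_mul_of_nonneg_right key hB0

end Aux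


section Generic

variable {X : Type*} [NormedAddCommGroup X] [NormedSpace ℝ X]

/-- Generic converse: if the summability space of every wuC series is complete,
then `X` is complete. -/
theorem completeSpace_of_method (Q : (ℕ → X) → X → Prop)
    (hconst : ∀ (S : ℕ → X) (L : X), (∀ᶠ k in atTop, S k = L) → Q S L)
    (hsep : ∀ (S : ℕ → X) (L : X) (c : ℝ), 0 < c →
      (∀ᶠ k in atTop, c ≤ ‖S k - L‖) → ¬ Q S L)
    (h : ∀ x : ℕ → X, WUCSeries x →
      IsComplete {a : lp (fun _ : ℕ => ℝ) ⊤ |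
        ∃ L, Q (fun n => ∑ i ∈ Finset.range n, a i • x i) L}) :
    CompleteSpace X := by
  refine Metric.complete_of_cauchySeq_tendsto fun u hu => ?_
  by_contra hnot
  push_neg at hnot
  obtain ⟨φ, hφ, hd⟩ := hu.subseq_mem (V := fun n => {q | dist q.1 q.2 < (1/4 : ℝ) ^ n})
    (fun n => Metric.dist_mem_uniformity (by positivity))
  set y : ℕ → X := u ∘ φ with hy_def
  have hy : CauchySeq y := hu.comp_tendsto hφ.tendsto_atTop
  have hynot : ∀ L, ¬ Tendsto y atTop (nhds L) := fun L hL =>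
    hnot L (tendsto_nhds_of_cauchySeq_of_subseq hu hφ.tendsto_atTop hL)
  set x : ℕ → X := fun n => (2 : ℝ) ^ n • (y (n + 1) - y n) with hx_def
  have hxnorm : ∀ n, ‖x n‖ ≤ (1/2 : ℝ) ^ n := by
    intro n
    have hdn : dist (y (n + 1)) (y n) < (1/4 : ℝ) ^ n := hd n
    rw [hx_def, norm_smul, Real.norm_eq_abs, abs_of_nonneg (by positivity), ← dist_eq_norm]
    calc (2:ℝ) ^ n * dist (y (n + 1)) (y n) ≤ (2:ℝ) ^ n * (1/4 : ℝ) ^ n :=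
          mul_le_mul_of_nonneg_left hdn.le (by positivity)
      _ = (1/2 : ℝ) ^ n := by rw [← mul_pow]; norm_num
  have hwuc : WUCSeries x := by
    intro f
    refine Summable.of_nonneg_of_le (fun i => abs_nonneg _) (fun i => ?_)
      ((summable_geometric_of_lt_one (by norm_num) (by norm_num :
        (1/2 : ℝ) < 1)).mul_left ‖f‖)
    calc |f (x i)| = ‖f (x i)‖ := (Real.norm_eq_abs _).symm
      _ ≤ ‖f‖ * ‖x i‖ := f.le_opNorm _
      _ ≤ ‖f‖ * (1/2 : ℝ) ^ i := mul_le_mul_of_nonneg_left (hxnorm i) (norm_nonneg _)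
  have hamem : Memℓp (fun i => (1/2 : ℝ) ^ i) (⊤ : ENNReal) := by
    apply memℓp_infty
    refine ⟨1, ?_⟩
    rintro r ⟨i, rfl⟩
    dsimp only
    rw [Real.norm_eq_abs, abs_of_nonneg (by positivity)]
    exact pow_le_one₀ (by norm_num) (by norm_num)
  set a : lp (fun _ : ℕ => ℝ) ⊤ := ⟨fun i => (1/2 : ℝ) ^ i, hamem⟩ with ha_def
  have htr : ∀ N : ℕ, Memℓp (fun i => if i < N then (1/2 : ℝ) ^ i else 0) (⊤ : ENNReal) := by
    intro N
    apply memℓp_infty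
    refine ⟨1, ?_⟩
    rintro r ⟨i, rfl⟩
    dsimp only
    split
    · rw [Real.norm_eq_abs, abs_of_nonneg (by positivity)]
      exact pow_le_one₀ (by norm_num) (by norm_num)
    · simp
  set A : ℕ → lp (fun _ : ℕ => ℝ) ⊤ := fun N => ⟨_, htr N⟩ with hA_def
  have hAmem : ∀ N, A N ∈ {a : lp (fun _ : ℕ => ℝ) ⊤ |
      ∃ L, Q (fun n => ∑ i ∈ Finset.range n, a i • x i) L} := by
    intro N
    refine ⟨∑ i ∈ Finset.range N, (if i < N then (1/2 : ℝ) ^ i else 0) • x i,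
      hconst _ _ ?_⟩
    filter_upwards [eventually_ge_atTop N] with k hk
    refine (Finset.sum_subset (Finset.range_subset_range.2 hk) fun i _ hiN => ?_).symm
    have : ¬ i < N := fun hlt => hiN (Finset.mem_range.2 hlt)
    show (if i < N then (1/2 : ℝ) ^ i else 0) • x i = 0
    rw [if_neg this, zero_smul]
  have hAtend : Tendsto A atTop (nhds a) := by
    rw [tendsto_iff_dist_tendsto_zero]
    refine squeeze_zero (fun _ => dist_nonneg) (g := fun N => (1/2 : ℝ) ^ N) ?_
      (tendsto_pow_atTop_nhds_zero_of_lt_one (by norm_num) (by norm_num))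
    intro N
    rw [dist_eq_norm]
    refine lp.norm_le_of_forall_le (by positivity) fun i => ?_
    have : (A N - a) i = (A N) i - a i := rfl
    rw [this]
    show ‖(if i < N then (1/2 : ℝ) ^ i else 0) - (1/2 : ℝ) ^ i‖ ≤ (1/2 : ℝ) ^ N
    split
    · simp [le_of_lt, pow_nonneg]
    · rw [zero_sub, norm_neg, Real.norm_eq_abs, abs_of_nonneg (by positivity)]
      exact pow_le_pow_of_le_one (by norm_num) (by norm_num) (not_lt.1 ‹¬ i < N›)
  have hclosed := (h x hwuc).isClosed
  have hamem' : a ∈ {a : lp (fun _ : ℕ => ℝ) ⊤ |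
      ∃ L, Q (fun n => ∑ i ∈ Finset.range n, a i • x i) L} :=
    hclosed.mem_of_tendsto hAtend (Eventually.of_forall hAmem)
  obtain ⟨L, hQ⟩ := hamem'
  have hps : (fun n => ∑ i ∈ Finset.range n, a i • x i) = fun n => y n - y 0 := by
    funext n
    have : ∀ i, a i • x i = y (i + 1) - y i := by
      intro i
      show ((1/2 : ℝ) ^ i) • ((2 : ℝ) ^ i • (y (i + 1) - y i)) = y (i + 1) - y i
      rw [smul_smul, ← mul_pow]
      norm_num
    simp only [this]
    exact Finset.sum_range_sub (fun k => y k) n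
  rw [hps] at hQ
  have hCy : CauchySeq (fun n => y n - y 0) := (uniformContinuous_id.sub uniformContinuous_const).comp_cauchySeq hy
  have hnT : ¬ Tendsto (fun n => y n - y 0) atTop (nhds L) := by
    intro hT
    have : Tendsto (fun n => (y n - y 0) + y 0) atTop (nhds (L + y 0)) :=
      hT.add_const _
    simp only [sub_add_cancel] at this
    exact hynot _ this
  obtain ⟨c, hc, hev⟩ := exists_lower_of_cauchy_not_tendsto hCy hnT
  exact hsep _ _ c hc hev hQ

/-- Generic forward: if `X` is complete, then each summability space is complete. -/
theorem isComplete_of_method [CompleteSpace X] (Q : (ℕ → X) → X → Prop)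
    (hjoint : ∀ (S S' : ℕ → X) (L L' : X), Q S L → Q S' L' →
      ∀ δ > (0 : ℝ), ∃ k, ‖S k - L‖ < δ ∧ ‖S' k - L'‖ < δ)
    (hlim : ∀ (S : ℕ → X) (L : X) (T : ℕ → ℕ → X) (M : ℕ → X) (τ : ℕ → ℝ),
      (∀ n, Q (T n) (M n)) → (∀ n k, ‖S k - L‖ ≤ ‖T n k - M n‖ + τ n) →
      Tendsto τ atTop (nhds 0) → Q S L)
    (x : ℕ → X) (hx : WUCSeries x) :
    IsComplete {a : lp (fun _ : ℕ => ℝ) ⊤ |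
      ∃ L, Q (fun n => ∑ i ∈ Finset.range n, a i • x i) L} := by
  obtain ⟨C, hC0, hC⟩ := wuc_bound' hx
  refine (IsSeqClosed.isClosed ?_).isComplete
  intro A a hA hAa
  choose L hL using hA
  have hdiff : ∀ (b b' : lp (fun _ : ℕ => ℝ) ⊤) (k : ℕ),
      ‖(∑ i ∈ Finset.range k, b i • x i) - ∑ i ∈ Finset.range k, b' i • x i‖
        ≤ C * ‖b - b'‖ := by
    intro b b' k
    rw [← Finset.sum_sub_distrib]
    have heq : ∀ i ∈ Finset.range k, b i • x i - b' i • x i = (b i - b' i) • x i :=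
      fun i _ => (sub_smul _ _ _).symm
    rw [Finset.sum_congr rfl heq]
    refine hC _ _ k fun i => ?_
    have : b i - b' i = (b - b') i := rfl
    rw [this, ← Real.norm_eq_abs]
    exact lp.norm_apply_le_norm ENNReal.top_ne_zero _ i
  have hAc : CauchySeq A := hAa.cauchySeq
  have hcauchyL : CauchySeq L := by
    rw [Metric.cauchySeq_iff]
    intro ε hε
    obtain ⟨N, hN⟩ := (Metric.cauchySeq_iff.1 hAc) (ε / 3 / (C + 1)) (by positivity)
    refine ⟨N, fun m hm n hn => ?_⟩
    obtain ⟨k, hk1, hk2⟩ := hjoint _ _ _ _ (hL m) (hL n) (ε / 3) (by linarith)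
    have htri : dist (L m) (L n) ≤ dist (L m) (∑ i ∈ Finset.range k, (A m) i • x i)
        + dist (∑ i ∈ Finset.range k, (A m) i • x i) (∑ i ∈ Finset.range k, (A n) i • x i)
        + dist (∑ i ∈ Finset.range k, (A n) i • x i) (L n) := dist_triangle4 _ _ _ _
    have h1 : dist (L m) (∑ i ∈ Finset.range k, (A m) i • x i) < ε / 3 := by
      rw [dist_comm, dist_eq_norm]; exact hk1
    have h2 : dist (∑ i ∈ Finset.range k, (A n) i • x i) (L n) < ε / 3 := by
      rw [dist_eq_norm]; exact hk2
    have h3 : dist (∑ i ∈ Finset.range k, (A m) i • x i)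
        (∑ i ∈ Finset.range k, (A n) i • x i) ≤ ε / 3 := by
      rw [dist_eq_norm]
      refine (hdiff (A m) (A n) k).trans ?_
      have hd : ‖A m - A n‖ = dist (A m) (A n) := (dist_eq_norm _ _).symm
      have hlt : ‖A m - A n‖ < ε / 3 / (C + 1) := by
        rw [hd]; exact hN m hm n hn
      calc C * ‖A m - A n‖ ≤ C * (ε / 3 / (C + 1)) :=
            mul_le_mul_of_nonneg_left hlt.le hC0
        _ ≤ (C + 1) * (ε / 3 / (C + 1)) := by
            apply mul_le_mul_of_nonneg_right (by linarith) (by positivity)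
        _ = ε / 3 := by field_simp
    linarith
  obtain ⟨Z, hZ⟩ := cauchySeq_tendsto_of_complete hcauchyL
  refine ⟨Z, hlim _ _ (fun n k => ∑ i ∈ Finset.range k, (A n) i • x i) L
    (fun n => C * ‖a - A n‖ + ‖L n - Z‖) hL ?_ ?_⟩
  · intro n k
    dsimp only
    have htri : dist (∑ i ∈ Finset.range k, a i • x i) Z
        ≤ dist (∑ i ∈ Finset.range k, a i • x i) (∑ i ∈ Finset.range k, (A n) i • x i)
          + dist (∑ i ∈ Finset.range k, (A n) i • x i) (L n)
          + dist (L n) Z := dist_triangle4 _ _ _ _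
    rw [dist_eq_norm, dist_eq_norm, dist_eq_norm, dist_eq_norm] at htri
    have := hdiff a (A n) k
    linarith
  · have h1 : Tendsto (fun n => ‖a - A n‖) atTop (nhds 0) := by
      have := tendsto_iff_dist_tendsto_zero.1 hAa
      refine this.congr fun n => ?_
      rw [dist_eq_norm, norm_sub_rev]
    have h2 : Tendsto (fun n => ‖L n - Z‖) atTop (nhds 0) := by
      have := tendsto_iff_dist_tendsto_zero.1 hZ
      refine this.congr fun n => ?_
      rw [dist_eq_norm]
    have := (h1.const_mul C).add h2
    simpa using this

end Generic


section Methods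

variable {X : Type*} [NormedAddCommGroup X] {θ : ℕ → ℕ}

theorem IsLacunary.lt (hθ : IsLacunary θ) (r : ℕ) : θ r < θ (r + 1) :=
  hθ.2.1 (Nat.lt_succ_self r)

theorem IsLacunary.hpos (hθ : IsLacunary θ) (r : ℕ) : (0 : ℝ) < (θ (r + 1) : ℝ) - θ r := by
  have := hθ.lt r
  rw [sub_pos]
  exact_mod_cast this

theorem IsLacunary.hcard (hθ : IsLacunary θ) (r : ℕ) :
    ((Finset.Ioc (θ r) (θ (r + 1))).card : ℝ) = (θ (r + 1) : ℝ) - θ r := by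
  rw [Nat.card_Ioc, Nat.cast_sub (hθ.lt r).le]

theorem IsLacunary.indices_large (hθ : IsLacunary θ) (N : ℕ) :
    ∀ᶠ r in atTop, ∀ k ∈ Finset.Ioc (θ r) (θ (r + 1)), N ≤ k := by
  filter_upwards [eventually_ge_atTop N] with r hr k hk
  have h1 : θ r < k := (Finset.mem_Ioc.1 hk).1
  have h2 : r ≤ θ r := hθ.2.1.le_apply
  omega

/-! ### `N_θ` method lemmas -/

theorem ntheta_const (hθ : IsLacunary θ) (S : ℕ → X) (L : X)
    (h : ∀ᶠ k in atTop, S k = L) : NthetaSummable θ S L := by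
  obtain ⟨N, hN⟩ := eventually_atTop.1 h
  apply tendsto_const_nhds.congr'
  filter_upwards [hθ.indices_large N] with r hr
  have hz : ∀ k ∈ Finset.Ioc (θ r) (θ (r + 1)), ‖S k - L‖ = (0 : ℝ) := fun k hk => by
    rw [hN k (hr k hk), sub_self, norm_zero]
  rw [Finset.sum_congr rfl hz, Finset.sum_const, smul_zero, mul_zero]

theorem ntheta_sep (hθ : IsLacunary θ) (S : ℕ → X) (L : X) (c : ℝ) (hc : 0 < c)
    (h : ∀ᶠ k in atTop, c ≤ ‖S k - L‖) : ¬ NthetaSummable θ S L := by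
  intro hQ
  obtain ⟨N, hN⟩ := eventually_atTop.1 h
  have hev : ∀ᶠ r in atTop, c ≤ (1 / ((θ (r + 1) : ℝ) - θ r)) *
      ∑ k ∈ Finset.Ioc (θ r) (θ (r + 1)), ‖S k - L‖ := by
    filter_upwards [hθ.indices_large N] with r hr
    have hsum : ((Finset.Ioc (θ r) (θ (r + 1))).card : ℝ) * c
        ≤ ∑ k ∈ Finset.Ioc (θ r) (θ (r + 1)), ‖S k - L‖ := by
      have := Finset.card_nsmul_le_sum (Finset.Ioc (θ r) (θ (r + 1)))
        (fun k => ‖S k - L‖) c (fun k hk => hN k (hr k hk))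
      simpa [nsmul_eq_mul] using this
    rw [hθ.hcard r] at hsum
    have hpos := hθ.hpos r
    calc c = (1 / ((θ (r + 1) : ℝ) - θ r)) * (((θ (r + 1) : ℝ) - θ r) * c) := by
          field_simp
      _ ≤ _ := mul_le_mul_of_nonneg_left hsum (by positivity)
  have := ge_of_tendsto hQ hev
  linarith

theorem ntheta_joint (hθ : IsLacunary θ) (S S' : ℕ → X) (L L' : X)
    (hQ : NthetaSummable θ S L) (hQ' : NthetaSummable θ S' L') :
    ∀ δ > (0 : ℝ), ∃ k, ‖S k - L‖ < δ ∧ ‖S' k - L'‖ < δ := by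
  intro δ hδ
  obtain ⟨r, h1, h2⟩ := ((hQ.eventually_lt_const (by linarith : (0:ℝ) < δ / 2)).and
    (hQ'.eventually_lt_const (by linarith : (0:ℝ) < δ / 2))).exists
  by_contra hcon
  push_neg at hcon
  have hall : ∀ k ∈ Finset.Ioc (θ r) (θ (r + 1)),
      δ ≤ ‖S k - L‖ + ‖S' k - L'‖ := by
    intro k _
    rcases le_or_gt δ ‖S k - L‖ with hk | hk
    · have := norm_nonneg (S' k - L'); linarith
    · have := hcon k hk
      have := norm_nonneg (S k - L); linarith
  have hsum : ((Finset.Ioc (θ r) (θ (r + 1))).card : ℝ) * δ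
      ≤ ∑ k ∈ Finset.Ioc (θ r) (θ (r + 1)), (‖S k - L‖ + ‖S' k - L'‖) := by
    have := Finset.card_nsmul_le_sum (Finset.Ioc (θ r) (θ (r + 1)))
      (fun k => ‖S k - L‖ + ‖S' k - L'‖) δ hall
    simpa [nsmul_eq_mul] using this
  rw [Finset.sum_add_distrib, hθ.hcard r] at hsum
  have hpos := hθ.hpos r
  have hkey : δ ≤ (1 / ((θ (r + 1) : ℝ) - θ r)) *
        (∑ k ∈ Finset.Ioc (θ r) (θ (r + 1)), ‖S k - L‖
          + ∑ k ∈ Finset.Ioc (θ r) (θ (r + 1)), ‖S' k - L'‖) := by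
    calc δ = (1 / ((θ (r + 1) : ℝ) - θ r)) * (((θ (r + 1) : ℝ) - θ r) * δ) := by
          field_simp
      _ ≤ _ := mul_le_mul_of_nonneg_left hsum (by positivity)
  rw [mul_add] at hkey
  linarith

theorem ntheta_lim (hθ : IsLacunary θ) (S : ℕ → X) (L : X) (T : ℕ → ℕ → X) (M : ℕ → X)
    (τ : ℕ → ℝ) (hQ : ∀ n, NthetaSummable θ (T n) (M n))
    (hle : ∀ n k, ‖S k - L‖ ≤ ‖T n k - M n‖ + τ n)
    (hτ : Tendsto τ atTop (nhds 0)) : NthetaSummable θ S L := by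
  apply tendsto_zero_of_forall_eventually_lt
  · intro r
    have hpos := hθ.hpos r
    have : (0:ℝ) ≤ ∑ k ∈ Finset.Ioc (θ r) (θ (r + 1)), ‖S k - L‖ :=
      Finset.sum_nonneg fun k _ => norm_nonneg _
    positivity
  · intro ε hε
    obtain ⟨n, hn⟩ := (hτ.eventually_lt_const (by linarith : (0:ℝ) < ε / 2)).exists
    filter_upwards [(hQ n).eventually_lt_const (by linarith : (0:ℝ) < ε / 2)] with r hr
    have hpos := hθ.hpos r
    have hsum : ∑ k ∈ Finset.Ioc (θ r) (θ (r + 1)), ‖S k - L‖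
        ≤ (∑ k ∈ Finset.Ioc (θ r) (θ (r + 1)), ‖T n k - M n‖)
          + ((θ (r + 1) : ℝ) - θ r) * τ n := by
      calc ∑ k ∈ Finset.Ioc (θ r) (θ (r + 1)), ‖S k - L‖
          ≤ ∑ k ∈ Finset.Ioc (θ r) (θ (r + 1)), (‖T n k - M n‖ + τ n) :=
            Finset.sum_le_sum fun k _ => hle n k
        _ = _ := by
            rw [Finset.sum_add_distrib, Finset.sum_const, nsmul_eq_mul, hθ.hcard r]
    calc (1 / ((θ (r + 1) : ℝ) - θ r)) * ∑ k ∈ Finset.Ioc (θ r) (θ (r + 1)), ‖S k - L‖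
        ≤ (1 / ((θ (r + 1) : ℝ) - θ r)) *
          ((∑ k ∈ Finset.Ioc (θ r) (θ (r + 1)), ‖T n k - M n‖)
            + ((θ (r + 1) : ℝ) - θ r) * τ n) :=
          mul_le_mul_of_nonneg_left hsum (by positivity)
      _ = (1 / ((θ (r + 1) : ℝ) - θ r)) *
            (∑ k ∈ Finset.Ioc (θ r) (θ (r + 1)), ‖T n k - M n‖) + τ n := by
          field_simp
      _ < ε / 2 + ε / 2 := by
          have := hr
          linarith
      _ = ε := by ring

/-! ### `S_θ` method lemmas -/

theorem stheta_const (hθ : IsLacunary θ) (S : ℕ → X) (L : X)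
    (h : ∀ᶠ k in atTop, S k = L) : SthetaConvergent θ S L := by
  intro ε hε
  obtain ⟨N, hN⟩ := eventually_atTop.1 h
  apply tendsto_const_nhds.congr'
  filter_upwards [hθ.indices_large N] with r hr
  have hz : (Finset.Ioc (θ r) (θ (r + 1))).filter (fun k => ε ≤ ‖S k - L‖) = ∅ := by
    refine Finset.filter_false_of_mem fun k hk => ?_
    rw [hN k (hr k hk), sub_self, norm_zero]
    exact not_le.2 hε
  rw [hz]
  simp

theorem stheta_sep (hθ : IsLacunary θ) (S : ℕ → X) (L : X) (c : ℝ) (hc : 0 < c)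
    (h : ∀ᶠ k in atTop, c ≤ ‖S k - L‖) : ¬ SthetaConvergent θ S L := by
  intro hQ
  obtain ⟨N, hN⟩ := eventually_atTop.1 h
  have hev : ∀ᶠ r in atTop, (1:ℝ) ≤ (1 / ((θ (r + 1) : ℝ) - θ r)) *
      (((Finset.Ioc (θ r) (θ (r + 1))).filter (fun k => c ≤ ‖S k - L‖)).card : ℝ) := by
    filter_upwards [hθ.indices_large N] with r hr
    have hfull : (Finset.Ioc (θ r) (θ (r + 1))).filter (fun k => c ≤ ‖S k - L‖)
        = Finset.Ioc (θ r) (θ (r + 1)) :=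
      Finset.filter_true_of_mem fun k hk => hN k (hr k hk)
    rw [hfull, hθ.hcard r]
    have hpos := hθ.hpos r
    rw [one_div, inv_mul_cancel₀ hpos.ne']
  have := ge_of_tendsto (hQ c hc) hev
  linarith

theorem stheta_joint (hθ : IsLacunary θ) (S S' : ℕ → X) (L L' : X)
    (hQ : SthetaConvergent θ S L) (hQ' : SthetaConvergent θ S' L') :
    ∀ δ > (0 : ℝ), ∃ k, ‖S k - L‖ < δ ∧ ‖S' k - L'‖ < δ := by
  intro δ hδ
  obtain ⟨r, h1, h2⟩ := (((hQ δ hδ).eventually_lt_const (by norm_num : (0:ℝ) < 1 / 2)).and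
    ((hQ' δ hδ).eventually_lt_const (by norm_num : (0:ℝ) < 1 / 2))).exists
  set B1 := (Finset.Ioc (θ r) (θ (r + 1))).filter (fun k => δ ≤ ‖S k - L‖) with hB1
  set B2 := (Finset.Ioc (θ r) (θ (r + 1))).filter (fun k => δ ≤ ‖S' k - L'‖) with hB2
  have hpos := hθ.hpos r
  have hc1 : (B1.card : ℝ) < ((θ (r + 1) : ℝ) - θ r) / 2 := by
    have : (B1.card : ℝ) = ((θ (r + 1) : ℝ) - θ r) *
        ((1 / ((θ (r + 1) : ℝ) - θ r)) * (B1.card : ℝ)) := by field_simp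
    rw [this]
    calc ((θ (r + 1) : ℝ) - θ r) * ((1 / ((θ (r + 1) : ℝ) - θ r)) * (B1.card : ℝ))
        < ((θ (r + 1) : ℝ) - θ r) * (1 / 2) := by
          exact mul_lt_mul_of_pos_left h1 hpos
      _ = ((θ (r + 1) : ℝ) - θ r) / 2 := by ring
  have hc2 : (B2.card : ℝ) < ((θ (r + 1) : ℝ) - θ r) / 2 := by
    have : (B2.card : ℝ) = ((θ (r + 1) : ℝ) - θ r) *
        ((1 / ((θ (r + 1) : ℝ) - θ r)) * (B2.card : ℝ)) := by field_simp
    rw [this]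
    calc ((θ (r + 1) : ℝ) - θ r) * ((1 / ((θ (r + 1) : ℝ) - θ r)) * (B2.card : ℝ))
        < ((θ (r + 1) : ℝ) - θ r) * (1 / 2) := by
          exact mul_lt_mul_of_pos_left h2 hpos
      _ = ((θ (r + 1) : ℝ) - θ r) / 2 := by ring
  have hsub : B1 ∪ B2 ⊆ Finset.Ioc (θ r) (θ (r + 1)) := by
    intro k hk
    rcases Finset.mem_union.1 hk with hk | hk
    · exact Finset.mem_of_mem_filter _ hk
    · exact Finset.mem_of_mem_filter _ hk
  have hcard : ((B1 ∪ B2).card : ℝ) < ((Finset.Ioc (θ r) (θ (r + 1))).card : ℝ) := by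
    rw [hθ.hcard r]
    calc ((B1 ∪ B2).card : ℝ) ≤ (B1.card : ℝ) + (B2.card : ℝ) := by
          exact_mod_cast Finset.card_union_le B1 B2
      _ < ((θ (r + 1) : ℝ) - θ r) / 2 + ((θ (r + 1) : ℝ) - θ r) / 2 := by linarith
      _ = (θ (r + 1) : ℝ) - θ r := by ring
  have hlt : (B1 ∪ B2).card < (Finset.Ioc (θ r) (θ (r + 1))).card := by exact_mod_cast hcard
  have hne : (Finset.Ioc (θ r) (θ (r + 1)) \ (B1 ∪ B2)).Nonempty := by
    rw [← Finset.card_pos, Finset.card_sdiff_of_subset hsub]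
    omega
  obtain ⟨k, hk⟩ := hne
  rw [Finset.mem_sdiff] at hk
  obtain ⟨hkI, hkB⟩ := hk
  rw [Finset.mem_union, not_or] at hkB
  obtain ⟨hk1, hk2⟩ := hkB
  refine ⟨k, ?_, ?_⟩
  · by_contra hge
    exact hk1 (Finset.mem_filter.2 ⟨hkI, not_lt.1 hge⟩)
  · by_contra hge
    exact hk2 (Finset.mem_filter.2 ⟨hkI, not_lt.1 hge⟩)

theorem stheta_lim (hθ : IsLacunary θ) (S : ℕ → X) (L : X) (T : ℕ → ℕ → X) (M : ℕ → X)
    (τ : ℕ → ℝ) (hQ : ∀ n, SthetaConvergent θ (T n) (M n))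
    (hle : ∀ n k, ‖S k - L‖ ≤ ‖T n k - M n‖ + τ n)
    (hτ : Tendsto τ atTop (nhds 0)) : SthetaConvergent θ S L := by
  intro ε hε
  obtain ⟨n, hn⟩ := (hτ.eventually_lt_const (by linarith : (0:ℝ) < ε / 2)).exists
  have hsub : ∀ r, (Finset.Ioc (θ r) (θ (r + 1))).filter (fun k => ε ≤ ‖S k - L‖)
      ⊆ (Finset.Ioc (θ r) (θ (r + 1))).filter (fun k => ε / 2 ≤ ‖T n k - M n‖) := by
    intro r k hk
    rw [Finset.mem_filter] at hk ⊢
    refine ⟨hk.1, ?_⟩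
    have := hle n k
    linarith [hk.2]
  refine squeeze_zero (fun r => ?_) (fun r => ?_) (hQ n (ε / 2) (by linarith))
  · have hpos := hθ.hpos r
    positivity
  · have hpos := hθ.hpos r
    apply mul_le_mul_of_nonneg_left _ (by positivity : (0:ℝ) ≤ 1 / ((θ (r + 1) : ℝ) - θ r))
    exact_mod_cast Finset.card_le_card (hsub r)

/-! ### `w_p` method lemmas -/

theorem wp_const {p : ℝ} (hp : 1 ≤ p) (S : ℕ → X) (L : X)
    (h : ∀ᶠ k in atTop, S k = L) : WpSummable p S L := by
  have hp0 : p ≠ 0 := (zero_lt_one.trans_le hp).ne'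
  obtain ⟨N, hN⟩ := eventually_atTop.1 h
  have hconst : ∀ᶠ n in atTop, ∑ i ∈ Finset.range n, ‖S i - L‖ ^ p
      = ∑ i ∈ Finset.range N, ‖S i - L‖ ^ p := by
    filter_upwards [eventually_ge_atTop N] with n hn
    refine (Finset.sum_subset (Finset.range_subset_range.2 hn) fun i _ hi => ?_).symm
    have hNi : N ≤ i := not_lt.1 fun hlt => hi (Finset.mem_range.2 hlt)
    rw [hN i hNi, sub_self, norm_zero, Real.zero_rpow hp0]
  have hG : Tendsto (fun n : ℕ => (1 / (n : ℝ)) * ∑ i ∈ Finset.range N, ‖S i - L‖ ^ p)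
      atTop (nhds 0) := by
    simpa using tendsto_one_div_atTop_nhds_zero_nat.mul_const
      (∑ i ∈ Finset.range N, ‖S i - L‖ ^ p)
  refine hG.congr' ?_
  filter_upwards [hconst] with n hn
  rw [hn]

theorem wp_sep {p : ℝ} (hp : 1 ≤ p) (S : ℕ → X) (L : X) (c : ℝ) (hc : 0 < c)
    (h : ∀ᶠ k in atTop, c ≤ ‖S k - L‖) : ¬ WpSummable p S L := by
  intro hQ
  have hp0 : (0:ℝ) < p := zero_lt_one.trans_le hp
  obtain ⟨N, hN⟩ := eventually_atTop.1 h
  have hcp : (0:ℝ) < c ^ p := Real.rpow_pos_of_pos hc p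
  have hev : ∀ᶠ n : ℕ in atTop, c ^ p / 2 ≤ (1 / (n:ℝ)) * ∑ i ∈ Finset.range n, ‖S i - L‖ ^ p := by
    filter_upwards [eventually_ge_atTop (2 * N + 1)] with n hn
    have hn0 : (0:ℝ) < n := by
      have : 0 < n := by omega
      exact_mod_cast this
    have hsub : Finset.Ico N n ⊆ Finset.range n := by
      intro i hi
      rw [Finset.mem_range]
      exact (Finset.mem_Ico.1 hi).2
    have hsum1 : ∑ i ∈ Finset.Ico N n, ‖S i - L‖ ^ p
        ≤ ∑ i ∈ Finset.range n, ‖S i - L‖ ^ p :=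
      Finset.sum_le_sum_of_subset_of_nonneg hsub
        fun i _ _ => Real.rpow_nonneg (norm_nonneg _) p
    have hsum2 : ((n - N : ℕ) : ℝ) * c ^ p ≤ ∑ i ∈ Finset.Ico N n, ‖S i - L‖ ^ p := by
      have := Finset.card_nsmul_le_sum (Finset.Ico N n) (fun i => ‖S i - L‖ ^ p) (c ^ p)
        (fun i hi => Real.rpow_le_rpow hc.le (hN i (Finset.mem_Ico.1 hi).1) hp0.le)
      simpa [nsmul_eq_mul, Nat.card_Ico] using this
    have hNn : N ≤ n := by omega
    have hcast : ((n - N : ℕ) : ℝ) = (n:ℝ) - N := by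
      push_cast [Nat.cast_sub hNn]
      try ring
    have hhalf : (n:ℝ)/2 ≤ (n:ℝ) - N := by
      have h2 : (2*(N:ℝ)+1) ≤ n := by exact_mod_cast hn
      linarith
    calc c ^ p / 2 = (1/(n:ℝ)) * ((n:ℝ)/2 * c ^ p) := by field_simp; try ring
      _ ≤ (1/(n:ℝ)) * (((n:ℝ) - N) * c ^ p) := by
          apply mul_le_mul_of_nonneg_left _ (by positivity)
          exact mul_le_mul_of_nonneg_right hhalf hcp.le
      _ ≤ (1/(n:ℝ)) * ∑ i ∈ Finset.range n, ‖S i - L‖ ^ p := by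
          apply mul_le_mul_of_nonneg_left _ (by positivity)
          rw [← hcast]
          exact hsum2.trans hsum1
  have := ge_of_tendsto hQ hev
  linarith

theorem wp_joint {p : ℝ} (hp : 1 ≤ p) (S S' : ℕ → X) (L L' : X)
    (hQ : WpSummable p S L) (hQ' : WpSummable p S' L') :
    ∀ δ > (0:ℝ), ∃ k, ‖S k - L‖ < δ ∧ ‖S' k - L'‖ < δ := by
  intro δ hδ
  have hp0 : (0:ℝ) < p := zero_lt_one.trans_le hp
  have hδp : (0:ℝ) < δ ^ p := Real.rpow_pos_of_pos hδ p
  obtain ⟨n, ⟨h1, h2⟩, hn1⟩ := (((hQ.eventually_lt_const (half_pos hδp)).and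
    (hQ'.eventually_lt_const (half_pos hδp))).and (eventually_ge_atTop 1)).exists
  by_contra hcon
  push_neg at hcon
  have hn0 : (0:ℝ) < n := by exact_mod_cast hn1
  have hall : ∀ i ∈ Finset.range n, δ ^ p ≤ ‖S i - L‖ ^ p + ‖S' i - L'‖ ^ p := by
    intro i _
    rcases le_or_gt δ ‖S i - L‖ with hi | hi
    · have h3 : δ ^ p ≤ ‖S i - L‖ ^ p := Real.rpow_le_rpow hδ.le hi hp0.le
      have h4 := Real.rpow_nonneg (norm_nonneg (S' i - L')) p
      linarith
    · have h4 := hcon i hi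
      have h3 : δ ^ p ≤ ‖S' i - L'‖ ^ p := Real.rpow_le_rpow hδ.le h4 hp0.le
      have h5 := Real.rpow_nonneg (norm_nonneg (S i - L)) p
      linarith
  have hsum : (n:ℝ) * δ ^ p ≤ (∑ i ∈ Finset.range n, ‖S i - L‖ ^ p)
      + ∑ i ∈ Finset.range n, ‖S' i - L'‖ ^ p := by
    have := Finset.card_nsmul_le_sum (Finset.range n)
      (fun i => ‖S i - L‖ ^ p + ‖S' i - L'‖ ^ p) (δ ^ p) hall
    simpa [nsmul_eq_mul, Finset.card_range, Finset.sum_add_distrib] using this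
  have h5 : (1/(n:ℝ)) * ((n:ℝ) * δ ^ p) ≤ (1/(n:ℝ)) * ((∑ i ∈ Finset.range n, ‖S i - L‖ ^ p)
      + ∑ i ∈ Finset.range n, ‖S' i - L'‖ ^ p) :=
    mul_le_mul_of_nonneg_left hsum (by positivity)
  rw [mul_add] at h5
  have h6 : (1/(n:ℝ)) * ((n:ℝ) * δ ^ p) = δ ^ p := by field_simp
  rw [h6] at h5
  linarith

theorem wp_lim {p : ℝ} (hp : 1 ≤ p) (S : ℕ → X) (L : X) (T : ℕ → ℕ → X) (M : ℕ → X)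
    (τ : ℕ → ℝ) (hQ : ∀ n, WpSummable p (T n) (M n))
    (hle : ∀ n k, ‖S k - L‖ ≤ ‖T n k - M n‖ + τ n)
    (hτ : Tendsto τ atTop (nhds 0)) : WpSummable p S L := by
  have hp0 : (0:ℝ) < p := zero_lt_one.trans_le hp
  apply tendsto_zero_of_forall_eventually_lt
  · intro m
    have h0 : (0:ℝ) ≤ ∑ i ∈ Finset.range m, ‖S i - L‖ ^ p :=
      Finset.sum_nonneg fun i _ => Real.rpow_nonneg (norm_nonneg _) p
    positivity
  · intro ε hε
    set δ : ℝ := ((ε/2) ^ p⁻¹) / 2 with hδdef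
    have hδ : 0 < δ := by
      have := Real.rpow_pos_of_pos (half_pos hε) p⁻¹
      positivity
    have h2δ : (2 * δ) ^ p = ε / 2 := by
      have h2 : 2 * δ = (ε/2) ^ p⁻¹ := by rw [hδdef]; ring
      rw [h2, Real.rpow_inv_rpow (by linarith) hp0.ne']
    obtain ⟨n, hn⟩ := (hτ.eventually_lt_const hδ).exists
    have hptwise : ∀ i, ‖S i - L‖ ^ p ≤ ε / 2 + (2:ℝ) ^ p * ‖T n i - M n‖ ^ p := by
      intro i
      have h1 : ‖S i - L‖ ≤ ‖T n i - M n‖ + δ := (hle n i).trans (by linarith)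
      have h6 : (0:ℝ) ≤ (2:ℝ) ^ p := Real.rpow_nonneg (by norm_num) p
      rcases le_or_gt ‖T n i - M n‖ δ with hi | hi
      · have h3 : ‖S i - L‖ ≤ 2 * δ := by linarith
        have h4 : ‖S i - L‖ ^ p ≤ (2*δ) ^ p := Real.rpow_le_rpow (norm_nonneg _) h3 hp0.le
        have h5 : (0:ℝ) ≤ (2:ℝ) ^ p * ‖T n i - M n‖ ^ p :=
          mul_nonneg h6 (Real.rpow_nonneg (norm_nonneg _) p)
        rw [h2δ] at h4
        linarith
      · have h3 : ‖S i - L‖ ≤ 2 * ‖T n i - M n‖ := by linarith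
        have h4 : ‖S i - L‖ ^ p ≤ (2 * ‖T n i - M n‖) ^ p :=
          Real.rpow_le_rpow (norm_nonneg _) h3 hp0.le
        rw [Real.mul_rpow (by norm_num) (norm_nonneg _)] at h4
        linarith
    have hG : Tendsto (fun m : ℕ => (2:ℝ)^p *
        ((1/(m:ℝ)) * ∑ i ∈ Finset.range m, ‖T n i - M n‖ ^ p)) atTop (nhds 0) := by
      simpa using (hQ n).const_mul ((2:ℝ)^p)
    filter_upwards [hG.eventually_lt_const (half_pos hε), eventually_ge_atTop 1] with m hm hm1
    have hm0 : (0:ℝ) < m := by exact_mod_cast hm1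
    have hsum : ∑ i ∈ Finset.range m, ‖S i - L‖ ^ p
        ≤ (m:ℝ) * (ε/2) + (2:ℝ)^p * ∑ i ∈ Finset.range m, ‖T n i - M n‖ ^ p := by
      calc ∑ i ∈ Finset.range m, ‖S i - L‖ ^ p
          ≤ ∑ i ∈ Finset.range m, (ε / 2 + (2:ℝ) ^ p * ‖T n i - M n‖ ^ p) :=
            Finset.sum_le_sum fun i _ => hptwise i
        _ = _ := by
            rw [Finset.sum_add_distrib, Finset.sum_const, Finset.card_range, nsmul_eq_mul,
              ← Finset.mul_sum]
    calc (1/(m:ℝ)) * ∑ i ∈ Finset.range m, ‖S i - L‖ ^ p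
        ≤ (1/(m:ℝ)) * ((m:ℝ) * (ε/2) + (2:ℝ)^p * ∑ i ∈ Finset.range m, ‖T n i - M n‖ ^ p) :=
          mul_le_mul_of_nonneg_left hsum (by positivity)
      _ = ε/2 + (2:ℝ)^p * ((1/(m:ℝ)) * ∑ i ∈ Finset.range m, ‖T n i - M n‖ ^ p) := by
          field_simp
      _ < ε/2 + ε/2 := by linarith
      _ = ε := by ring

end Methods





/-- Completeness of a normed space is characterized by completeness of the
`N_θ`-, `S_θ`- and `w_p`-summability spaces of all wuC series. -/
theorem completeSpace_tfae {X : Type*} [NormedAddCommGroup X] [NormedSpace ℝ X]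
    (θ : ℕ → ℕ) (hθ : IsLacunary θ) (p : ℝ) (hp : 1 ≤ p) :
    [CompleteSpace X,
      ∀ x : ℕ → X, WUCSeries x → IsComplete (NthetaSummabilitySpace θ x),
      ∀ x : ℕ → X, WUCSeries x → IsComplete (SthetaSummabilitySpace θ x),
      ∀ x : ℕ → X, WUCSeries x → IsComplete (WpSummabilitySpace p x)].TFAE := by
  tfae_have 1 → 2 := by
    intro h1 x hx
    haveI := h1
    exact isComplete_of_method (NthetaSummable θ) (ntheta_joint hθ) (ntheta_lim hθ) x hx
  tfae_have 1 → 3 := by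
    intro h1 x hx
    haveI := h1
    exact isComplete_of_method (SthetaConvergent θ) (stheta_joint hθ) (stheta_lim hθ) x hx
  tfae_have 1 → 4 := by
    intro h1 x hx
    haveI := h1
    exact isComplete_of_method (WpSummable p) (wp_joint hp) (wp_lim hp) x hx
  tfae_have 2 → 1 := fun h2 =>
    completeSpace_of_method (NthetaSummable θ) (ntheta_const hθ) (ntheta_sep hθ) h2
  tfae_have 3 → 1 := fun h3 =>
    completeSpace_of_method (SthetaConvergent θ) (stheta_const hθ) (stheta_sep hθ) h3
  tfae_have 4 → 1 := fun h4 =>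
    completeSpace_of_method (WpSummable p) (wp_const hp) (wp_sep hp) h4
  tfae_finish
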